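/- Let A = ℂ[h₁]/(h₁²), let R = R_{h₁} be the 4×4 matrix with rows (1,0,0,0), (−h₁,1,0,0), (h₁,0,1,0), (0,h₁,h₁,1), let P be the super permutation matrix with P^{ij}_{kl} = (−1)^{ij} δ^i_l δ^j_k, and set R̂ = P·R. With the graded embeddings R̂₁₂, R̂₂₃ defined by (R̂₁₂)^{abc}_{def} = R̂^{ab}_{de} δ^c_f and (R̂₂₃)^{abc}_{def} = (−1)^{a(b+c+e+f)} R̂^{bc}_{ef} δ^a_d, the graded braid equation R̂₁₂ R̂₂₃ R̂₁₂ = R̂₂₃ R̂₁₂ R̂₂₃ holds. -/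

import Mathlib

noncomputable section

open Matrix DualNumber

/-- The ring `A = ℂ[h₁]/(h₁²)` of dual numbers. -/
abbrev A1 := DualNumber ℂ

/-- `h₁`. -/
def h1 : A1 := DualNumber.eps

/-- Pairs `(a,b)` with `a,b ∈ {0,1}` indexed in the order (0,0),(0,1),(1,0),(1,1). -/
def pr (a b : Fin 2) : Fin 4 := ⟨2 * a.val + b.val, by omega⟩

/-- The 4×4 matrix `R_{h₁}`. -/
def Rh1 : Matrix (Fin 4) (Fin 4) A1 :=
  !![1, 0, 0, 0;
     -h1, 1, 0, 0;
     h1, 0, 1, 0;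
     0, h1, h1, 1]

/-- The super permutation matrix `P`, `P^{ij}_{kl} = (−1)^{ij} δ^i_l δ^j_k`. -/
def Psuper : Matrix (Fin 4) (Fin 4) A1 :=
  !![1, 0, 0, 0;
     0, 0, 1, 0;
     0, 1, 0, 0;
     0, 0, 0, -1]

/-- `R̂ = P·R`. -/
def Rhat : Matrix (Fin 4) (Fin 4) A1 := Psuper * Rh1

/-- Entry `R̂^{ab}_{de}`. -/
def Rhf (a b d e : Fin 2) : A1 := Rhat (pr a b) (pr d e)

/-- `(R̂₁₂)^{abc}_{def} = R̂^{ab}_{de} δ^c_f`. -/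
def Rhat12 : Matrix (Fin 2 × Fin 2 × Fin 2) (Fin 2 × Fin 2 × Fin 2) A1 :=
  Matrix.of fun p q => if p.2.2 = q.2.2 then Rhf p.1 p.2.1 q.1 q.2.1 else 0

/-- `(R̂₂₃)^{abc}_{def} = (−1)^{a(b+c+e+f)} R̂^{bc}_{ef} δ^a_d`. -/
def Rhat23 : Matrix (Fin 2 × Fin 2 × Fin 2) (Fin 2 × Fin 2 × Fin 2) A1 :=
  Matrix.of fun p q =>
    (-1 : A1) ^ (p.1.val * (p.2.1.val + p.2.2.val + q.2.1.val + q.2.2.val)) *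
      (if p.1 = q.1 then Rhf p.2.1 p.2.2 q.2.1 q.2.2 else 0)


/-! Auxiliary: computation over `DualNumber ℤ`, transported via a ring hom. -/

abbrev Zd := DualNumber ℤ
instance : DecidableEq Zd := inferInstanceAs (DecidableEq (ℤ × ℤ))

def ez : Zd := DualNumber.eps

def Rz : Matrix (Fin 4) (Fin 4) Zd :=
  !![1, 0, 0, 0; ez, 0, 1, 0; -ez, 1, 0, 0; 0, -ez, -ez, -1]

def M12z : Matrix (Fin 2 × Fin 2 × Fin 2) (Fin 2 × Fin 2 × Fin 2) Zd :=
  Matrix.of fun p q => if p.2.2 = q.2.2 then Rz (pr p.1 p.2.1) (pr q.1 q.2.1) else 0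

def M23z : Matrix (Fin 2 × Fin 2 × Fin 2) (Fin 2 × Fin 2 × Fin 2) Zd :=
  Matrix.of fun p q =>
    (-1 : Zd) ^ (p.1.val * (p.2.1.val + p.2.2.val + q.2.1.val + q.2.2.val)) *
      (if p.1 = q.1 then Rz (pr p.2.1 p.2.2) (pr q.2.1 q.2.2) else 0)

lemma braidZ : M12z * M23z * M12z = M23z * M12z * M23z := by decide

/-- The ring hom `DualNumber ℤ →+* DualNumber ℂ`. -/
def phi : Zd →+* A1 where
  toFun x := (((x.fst : ℤ) : ℂ), ((x.snd : ℤ) : ℂ))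
  map_one' := by ext <;> simp
  map_mul' x y := by
    ext <;> simp [TrivSqZeroExt.fst_mul, TrivSqZeroExt.snd_mul] <;> push_cast <;> rfl
  map_zero' := by ext <;> simp
  map_add' x y := by ext <;> simp <;> rfl

lemma phi_fst (x : Zd) : (phi x).fst = ((x.fst : ℤ) : ℂ) := rfl
lemma phi_snd (x : Zd) : (phi x).snd = ((x.snd : ℤ) : ℂ) := rfl

lemma phi_ez : phi ez = h1 := by
  ext <;> simp [phi_fst, phi_snd, ez, h1]

lemma Rhat_eq : Rhat = Rz.map phi := by
  rw [Rhat, Psuper, Rh1]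
  refine Matrix.ext fun i j => ?_
  fin_cases i <;> fin_cases j <;>
    simp [Matrix.mul_apply, Fin.sum_univ_succ, Rz, phi_ez, _root_.map_neg, _root_.map_one, _root_.map_zero]

lemma Rhf_phi (a b d e : Fin 2) : Rhf a b d e = phi (Rz (pr a b) (pr d e)) := by
  rw [Rhf, Rhat_eq]; rfl

lemma R12_phi : Rhat12 = M12z.map phi := by
  refine Matrix.ext fun p q => ?_
  simp only [Rhat12, M12z, Matrix.map_apply, Matrix.of_apply, Rhf_phi]
  split <;> simp

lemma R23_phi : Rhat23 = M23z.map phi := by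
  refine Matrix.ext fun p q => ?_
  simp only [Rhat23, M23z, Matrix.map_apply, Matrix.of_apply, Rhf_phi, _root_.map_mul, map_pow, _root_.map_neg,
    _root_.map_one]
  congr 1
  split <;> simp

/-- the graded braid equation for `R̂_{h₁} = P R_{h₁}`. -/
theorem stmt_5 : Rhat12 * Rhat23 * Rhat12 = Rhat23 * Rhat12 * Rhat23 := by
  rw [R12_phi, R23_phi, ← Matrix.map_mul, ← Matrix.map_mul, ← Matrix.map_mul, ← Matrix.map_mul,
    braidZ]
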